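/- arXiv:2207.07582 — 2 statements merged into one kernel-verified Lean document; each statement's English description precedes it below -/
import Mathlib

section
/- Let b > 0 be a real number, θ ∈ ℝ a direction, and Z a distribution of points on ℂ. Then the exponential system Exp^Z is complete in Hol(D) for every convex domain D ⊆ ℂ whose width in direction θ satisfies width_D(θ) ≤ b, if and only if Exp^Z is complete in the Banach space C(K) ∩ Hol(int K) for every convex compact set K ⊆ ℂ whose width in direction θ satisfies width_K(θ) < b. -/
open Complex Filter Set
open scoped ENNReal ENat

noncomputable section

/-- The exponential system `Exp^Z` of a distribution of points `Z` on `ℂ`: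
the functions `w ↦ w^p e^{z w}` for each value `z` occurring in `Z` with multiplicity
`m(z)`, with `p = 0, 1, …, m(z) − 1`. -/
def expSystem (Z : ℕ → ℂ) : Set (ℂ → ℂ) :=
  {f | ∃ z : ℂ, ∃ p : ℕ, (p : ℕ∞) < {n : ℕ | Z n = z}.encard ∧
    f = fun w => w ^ p * Complex.exp (z * w)}

/-- Completeness of the family `F` in `Hol(D)`: every holomorphic function on `D`
can be approximated, uniformly on each compact subset of `D` and to any accuracy,
by finite linear combinations of members of `F`. -/
def CompleteHol (F : Set (ℂ → ℂ)) (D : Set ℂ) : Prop :=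
  ∀ f : ℂ → ℂ, DifferentiableOn ℂ f D →
    ∀ K : Set ℂ, K ⊆ D → IsCompact K → ∀ ε : ℝ, 0 < ε →
      ∃ g ∈ Submodule.span ℂ F, ∀ z ∈ K, ‖f z - g z‖ < ε

/-- Completeness of the family `F` in the Banach space `C(K) ∩ Hol(int K)`
with the sup-norm on `K`. -/
def CompleteCK (F : Set (ℂ → ℂ)) (K : Set ℂ) : Prop :=
  ∀ f : ℂ → ℂ, ContinuousOn f K → DifferentiableOn ℂ f (interior K) →
    ∀ ε : ℝ, 0 < ε → ∃ g ∈ Submodule.span ℂ F, ∀ z ∈ K, ‖f z - g z‖ < ε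

/-- Completeness of the family `F` in the space `C(A) ∩ Hol(O)` of functions continuous
on `A` and holomorphic on `O`, with the topology of uniform convergence on compact
subsets of `A`. -/
def CompleteClOp (F : Set (ℂ → ℂ)) (A O : Set ℂ) : Prop :=
  ∀ f : ℂ → ℂ, ContinuousOn f A → DifferentiableOn ℂ f O →
    ∀ K : Set ℂ, K ⊆ A → IsCompact K → ∀ ε : ℝ, 0 < ε →
      ∃ g ∈ Submodule.span ℂ F, ∀ z ∈ K, ‖f z - g z‖ < ε

/-- Width of `S ⊆ ℂ` in direction `θ`:
`width_S(θ) = sup{Re((z−w)e^{−iθ}) : z, w ∈ S}` (with `sup ∅ = −∞`). -/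
def dirWidth (S : Set ℂ) (θ : ℝ) : EReal :=
  ⨆ z ∈ S, ⨆ w ∈ S, ((((z - w) * Complex.exp (-(θ : ℂ) * Complex.I)).re : ℝ) : EReal)

/-- The open strip `S_{b/2} = {z : |Im z| < b/2}` of width `b`. -/
def openStrip (b : ℝ) : Set ℂ := {z : ℂ | |z.im| < b / 2}

/-- The closed strip `S̄_{b/2} = {z : |Im z| ≤ b/2}` of width `b`. -/
def closedStrip (b : ℝ) : Set ℂ := {z : ℂ | |z.im| ≤ b / 2}

/-- Rotation `e^{iφ}S` of a set `S ⊆ ℂ`. -/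
def rotSet (φ : ℝ) (S : Set ℂ) : Set ℂ := (fun z => Complex.exp ((φ : ℂ) * Complex.I) * z) '' S

/-- Rotation `e^{iφ}Z` of a distribution of points `Z`. -/
def rotSeq (φ : ℝ) (Z : ℕ → ℂ) : ℕ → ℂ := fun n => Complex.exp ((φ : ℂ) * Complex.I) * Z n

/-- Upper density `dens⁺(Z) = limsup_{r→+∞} n_Z(r)/r` where `n_Z(r) = #{n : |z_n| ≤ r}`. -/
def upperDensity (Z : ℕ → ℂ) : ℝ≥0∞ :=
  Filter.limsup
    (fun r : ℝ => ({n : ℕ | ‖Z n‖ ≤ r}.encard : ℝ≥0∞) / ENNReal.ofReal r)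
    Filter.atTop

/-- Right logarithmic measure `ℓ_W(r,R) = Σ_{r<|w_n|≤R} max(Re(1/w_n), 0)`. -/
def rightLogMeasure (W : ℕ → ℂ) (r R : ℝ) : ℝ≥0∞ :=
  ∑' n : ℕ, Set.indicator {n : ℕ | r < ‖W n‖ ∧ ‖W n‖ ≤ R}
    (fun n => ENNReal.ofReal (max (1 / W n).re 0)) n

/-- Logarithmic submeasure `𝓛_W(r,R) = max(ℓ_W(r,R), ℓ_{−W}(r,R))`. -/
def logSubmeasure (W : ℕ → ℂ) (r R : ℝ) : ℝ≥0∞ :=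
  max (rightLogMeasure W r R) (rightLogMeasure (fun n => -W n) r R)

/-- A family `(w_i)` of complex numbers has finite Redheffer exterior density if there are
`c ≥ 0` and pairwise distinct integers `m_i` with `Σ_i |1/w_i − c/m_i| < +∞`. -/
def HasFinRedheffer {ι : Type*} (w : ι → ℂ) : Prop :=
  ∃ c : ℝ, 0 ≤ c ∧ ∃ m : ι → ℤ, Function.Injective m ∧
    Summable (fun i => ‖1 / w i - (c : ℂ) / (m i : ℂ)‖)

/-- `Z` has finite Redheffer exterior density near the direction `θ`. -/
def FinRedhefferNear (Z : ℕ → ℂ) (θ : ℝ) : Prop :=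
  ∃ a : ℝ, 0 < a ∧ a ≤ Real.pi / 2 ∧
    HasFinRedheffer (fun n : {n : ℕ // |Complex.arg (Z n) - θ| < a} =>
      Complex.exp (-(θ : ℂ) * Complex.I) * Z n.1)

/-- Logarithmic block-density `ln-dens(W)` of a distribution of points `W`. -/
def lnDensZ (W : ℕ → ℂ) : EReal :=
  Filter.limsup (fun a : ℝ => ((1 / Real.log a : ℝ) : EReal) *
    Filter.limsup (fun r : ℝ => ((logSubmeasure W r (a * r) : ℝ≥0∞) : EReal)) Filter.atTop)
    Filter.atTop

/-- Breadth of a set: the least width over all directions. -/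
def breadth (S : Set ℂ) : EReal := ⨅ θ : ℝ, dirWidth S θ

/-- Support function `h_S(θ) = sup_{s∈S} Re(s e^{−iθ})`. -/
def suppFn (S : Set ℂ) (θ : ℝ) : EReal :=
  ⨆ s ∈ S, (((s * Complex.exp (-(θ : ℂ) * Complex.I)).re : ℝ) : EReal)

/-- Homogeneous support function `H_S(z) = sup_{s∈S} Re(s·conj z)`. -/
def suppFnH (S : Set ℂ) (z : ℂ) : EReal :=
  ⨆ s ∈ S, (((s * (starRingEnd ℂ) z).re : ℝ) : EReal)

/-- A logarithmic submeasure of intervals: a positive function of intervals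
`(r,R] ⊆ (0,+∞)` with logarithmic growth and subadditivity. -/
def IsLogSubmeasure (ℓ : ℝ → ℝ → ℝ) : Prop :=
  (∀ r R : ℝ, 0 < r → r < R → 0 ≤ ℓ r R) ∧
  (∃ M : ℝ, ∀ r : ℝ, 0 < r → ℓ r (2 * r) ≤ M) ∧
  (∀ r₁ r₂ r₃ : ℝ, 0 < r₁ → r₁ < r₂ → r₂ < r₃ → ℓ r₁ r₃ ≤ ℓ r₁ r₂ + ℓ r₂ r₃)

lemma le_dirWidth {S : Set ℂ} {θ : ℝ} {z w : ℂ} (hz : z ∈ S) (hw : w ∈ S) :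
    ((((z - w) * Complex.exp (-(θ : ℂ) * Complex.I)).re : ℝ) : EReal) ≤ dirWidth S θ := by
  refine le_trans ?_ (le_iSup₂ (f := fun z (_ : z ∈ S) =>
    ⨆ w ∈ S, ((((z - w) * Complex.exp (-(θ : ℂ) * Complex.I)).re : ℝ) : EReal)) z hz)
  exact le_iSup₂ (f := fun w (_ : w ∈ S) =>
    ((((z - w) * Complex.exp (-(θ : ℂ) * Complex.I)).re : ℝ) : EReal)) w hw

lemma dirWidth_le {S : Set ℂ} {θ : ℝ} {C : ℝ}
    (h : ∀ z ∈ S, ∀ w ∈ S, ((z - w) * Complex.exp (-(θ : ℂ) * Complex.I)).re ≤ C) :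
    dirWidth S θ ≤ (C : EReal) := by
  refine iSup₂_le fun z hz => iSup₂_le fun w hw => ?_
  exact_mod_cast h z hz w hw

lemma proj_sub (θ : ℝ) (z w : ℂ) :
    ((z - w) * Complex.exp (-(θ : ℂ) * Complex.I)).re =
      (z * Complex.exp (-(θ : ℂ) * Complex.I)).re -
      (w * Complex.exp (-(θ : ℂ) * Complex.I)).re := by
  rw [sub_mul, Complex.sub_re]

lemma line_case {K : Set ℂ} (hKc : Convex ℝ K) (hne : K.Nonempty)
    (hint : ¬(interior K).Nonempty) :
    ∃ p : ℂ, ∃ v : ℂ, v ≠ 0 ∧ ∀ z ∈ K, ∃ t : ℝ, z = p + (t : ℂ) * v := by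
  obtain ⟨p, hp⟩ := hne
  have hspan : affineSpan ℝ K ≠ ⊤ := fun h =>
    hint ((hKc.interior_nonempty_iff_affineSpan_eq_top).2 h)
  set W := (affineSpan ℝ K).direction with hW
  have hWne : W ≠ ⊤ := by
    intro h
    apply hspan
    apply (AffineSubspace.direction_eq_top_iff_of_nonempty (s := affineSpan ℝ K) ?_).1 h
    exact ⟨p, subset_affineSpan ℝ K hp⟩
  have hfr : Module.finrank ℝ W ≤ 1 := by
    have h2 : Module.finrank ℝ ℂ = 2 := Complex.finrank_real_complex
    have := Submodule.finrank_lt (K := ℝ) (V := ℂ) hWne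
    omega
  have hP : W.IsPrincipal := (W.finrank_le_one_iff_isPrincipal).1 hfr
  obtain ⟨v, hv⟩ := hP.principal
  refine ⟨p, if v = 0 then 1 else v, by split <;> simp_all, fun z hz => ?_⟩
  have hzW : z - p ∈ W := by
    have := AffineSubspace.vsub_mem_direction
      (subset_affineSpan ℝ K hz) (subset_affineSpan ℝ K hp)
    simpa using this
  rw [hv, Submodule.mem_span_singleton] at hzW
  obtain ⟨t, ht⟩ := hzW
  rw [Complex.real_smul] at ht
  by_cases h0 : v = 0
  · refine ⟨0, ?_⟩
    rw [h0, mul_zero] at ht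
    have : z = p := by linear_combination -ht
    simp [this]
  · exact ⟨t, by rw [if_neg h0]; linear_combination -ht⟩

lemma line_approx {K : Set ℂ} (hK : IsCompact K) (hKc : Convex ℝ K)
    {p v : ℂ} (hv : v ≠ 0) (hline : ∀ z ∈ K, ∃ t : ℝ, z = p + (t : ℂ) * v)
    (f : ℂ → ℂ) (hf : ContinuousOn f K) {ε : ℝ} (hε : 0 < ε) :
    ∃ F : ℂ → ℂ, Differentiable ℂ F ∧ ∀ z ∈ K, ‖f z - F z‖ < ε := by
  classical
  rcases K.eq_empty_or_nonempty with rfl | hne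
  · exact ⟨0, differentiable_const 0, by simp⟩
  set τ : ℂ → ℝ := fun z => ((z - p) / v).re with hτ
  have hτcont : Continuous τ := by fun_prop
  have hτval : ∀ z ∈ K, z = p + (τ z : ℂ) * v := by
    intro z hz
    obtain ⟨t, ht⟩ := hline z hz
    have : τ z = t := by
      rw [hτ]; simp only [ht]
      rw [add_sub_cancel_left, mul_div_assoc, div_self hv, mul_one, Complex.ofReal_re]
    rw [this]; exact ht
  set T : Set ℝ := τ '' K with hT
  have hTc : IsCompact T := hK.image hτcont
  have hTconn : IsConnected T := ⟨hne.image τ, (hKc.isPreconnected).image τ hτcont.continuousOn⟩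
  have hTIcc : T = Icc (sInf T) (sSup T) := eq_Icc_of_connected_compact hTconn hTc
  set G : ℝ → ℂ := fun t => f (p + (t : ℂ) * v) with hG
  have hmaps : ∀ t ∈ T, p + (t : ℂ) * v ∈ K := by
    rintro t ⟨z, hz, rfl⟩
    rw [← hτval z hz]; exact hz
  have hGcont : ContinuousOn G T := by
    apply hf.comp (by fun_prop : Continuous fun t : ℝ => p + (t : ℂ) * v).continuousOn
    exact hmaps
  rw [hTIcc] at hGcont
  obtain ⟨P, hP⟩ := exists_polynomial_near_of_continuousOn (sInf T) (sSup T)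
    (fun t => (G t).re) (by fun_prop) (ε / 2) (by linarith)
  obtain ⟨Q, hQ⟩ := exists_polynomial_near_of_continuousOn (sInf T) (sSup T)
    (fun t => (G t).im) (by fun_prop) (ε / 2) (by linarith)
  set F : ℂ → ℂ := fun z =>
    (P.map (algebraMap ℝ ℂ)).eval ((z - p) / v) +
      Complex.I * (Q.map (algebraMap ℝ ℂ)).eval ((z - p) / v) with hF
  refine ⟨F, ?_, ?_⟩
  · have h1 : Differentiable ℂ fun z : ℂ => (z - p) / v := by fun_prop
    exact ((P.map (algebraMap ℝ ℂ)).differentiable.comp h1).add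
      ((differentiable_const _).mul ((Q.map (algebraMap ℝ ℂ)).differentiable.comp h1))
  · intro z hz
    have htT : τ z ∈ T := mem_image_of_mem τ hz
    have hzt : z = p + (τ z : ℂ) * v := hτval z hz
    have hzp : z - p = ((τ z : ℝ) : ℂ) * v := by linear_combination hzt
    have hvz : (z - p) / v = ((τ z : ℝ) : ℂ) := by
      rw [hzp, mul_div_assoc, div_self hv, mul_one]
    have hevP : (P.map (algebraMap ℝ ℂ)).eval ((z - p) / v) = ((P.eval (τ z) : ℝ) : ℂ) := by
      rw [hvz, Polynomial.eval_map]
      exact Polynomial.eval₂_at_apply (algebraMap ℝ ℂ) (τ z)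
    have hevQ : (Q.map (algebraMap ℝ ℂ)).eval ((z - p) / v) = ((Q.eval (τ z) : ℝ) : ℂ) := by
      rw [hvz, Polynomial.eval_map]
      exact Polynomial.eval₂_at_apply (algebraMap ℝ ℂ) (τ z)
    have hfG : f z = G (τ z) := by rw [hG]; simp only []; rw [← hzt]
    have hre : (f z - F z).re = (G (τ z)).re - P.eval (τ z) := by
      rw [hfG, hF]; simp [hevP, hevQ]
    have him : (f z - F z).im = (G (τ z)).im - Q.eval (τ z) := by
      rw [hfG, hF]; simp [hevP, hevQ]
    have hTmem := hTIcc ▸ htT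
    calc ‖f z - F z‖ ≤ |(f z - F z).re| + |(f z - F z).im| :=
          Complex.norm_le_abs_re_add_abs_im _
      _ < ε / 2 + ε / 2 := by
          rw [hre, him]
          have h1 : |(G (τ z)).re - P.eval (τ z)| < ε / 2 := by
            rw [abs_sub_comm]; exact hP (τ z) hTmem
          have h2 : |(G (τ z)).im - Q.eval (τ z)| < ε / 2 := by
            rw [abs_sub_comm]; exact hQ (τ z) hTmem
          exact add_lt_add h1 h2
      _ = ε := by ring

lemma dilation_approx {K : Set ℂ} (hK : IsCompact K) (hKc : Convex ℝ K)
    {z₀ : ℂ} (hz₀ : z₀ ∈ interior K)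
    (f : ℂ → ℂ) (hf : ContinuousOn f K) (hfd : DifferentiableOn ℂ f (interior K))
    {ε : ℝ} (hε : 0 < ε) :
    ∃ U : Set ℂ, IsOpen U ∧ Convex ℝ U ∧ K ⊆ U ∧
      ∃ F : ℂ → ℂ, DifferentiableOn ℂ F U ∧ ∀ z ∈ K, ‖f z - F z‖ < ε := by
  have huc := hK.uniformContinuousOn_of_continuous hf
  rw [Metric.uniformContinuousOn_iff] at huc
  obtain ⟨δ, hδ, hδ'⟩ := huc ε hε
  obtain ⟨R, hR⟩ := hK.isBounded.subset_closedBall z₀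
  have hR0 : 0 ≤ R := by
    have := hR (interior_subset hz₀); simpa using this
  set σ : ℝ := min (δ / (2 * (R + 1))) (1 / 2) with hσ
  have hσ0 : 0 < σ := by
    apply lt_min (by positivity) (by norm_num)
  have hσ1 : σ < 1 := lt_of_le_of_lt (min_le_right _ _) (by norm_num)
  set ρ : ℝ := 1 - σ with hρ
  set h : ℂ → ℂ := fun z => z₀ + (ρ : ℂ) * (z - z₀) with hh
  have hmem : ∀ z ∈ K, h z ∈ interior K := by
    intro z hz
    have hc := hKc.combo_interior_self_mem_interior hz₀ hz
      (a := 1 - ρ) (b := ρ) (by simp only [hρ]; linarith) (by linarith) (by ring)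
    have e1 : (1 - ρ) • z₀ + ρ • z = h z := by
      simp only [hh, Complex.real_smul]; push_cast; ring
    rwa [e1] at hc
  have hcont : Continuous h := by fun_prop
  refine ⟨h ⁻¹' interior K, isOpen_interior.preimage hcont, ?_, hmem, ?_⟩
  · intro x hx y hy a b ha hb hab
    have habc : (a : ℂ) + b = 1 := by exact_mod_cast congrArg Complex.ofReal hab
    have e1 : h (a • x + b • y) = a • h x + b • h y := by
      simp only [hh, Complex.real_smul]
      linear_combination ((ρ : ℂ) * z₀ - z₀) * habc
    show h _ ∈ interior K
    rw [e1]
    exact (hKc.interior) hx hy ha hb hab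
  · refine ⟨f ∘ h, ?_, ?_⟩
    · have hdiff : Differentiable ℂ h := by
        simp only [hh]
        exact (differentiable_const _).add
          ((differentiable_const _).mul (differentiable_id.sub (differentiable_const _)))
      exact hfd.comp hdiff.differentiableOn (fun z hz => hz)
    · intro z hz
      have hhzK : h z ∈ K := interior_subset (hmem z hz)
      have hdist : dist z (h z) < δ := by
        have hzh : z - h z = (σ : ℂ) * (z - z₀) := by
          simp only [hh, hρ]; push_cast; ring
        have : dist z (h z) = σ * ‖z - z₀‖ := by
          rw [dist_eq, hzh, norm_mul, Complex.norm_real, Real.norm_eq_abs, abs_of_pos hσ0]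
        rw [this]
        have hzR : ‖z - z₀‖ ≤ R := by
          have := hR hz; simpa [dist_eq] using this
        calc σ * ‖z - z₀‖ ≤ (δ / (2 * (R + 1))) * (R + 1) := by
              apply mul_le_mul (min_le_left _ _) (by linarith) (by positivity) (by positivity)
          _ = δ / 2 := by field_simp
          _ < δ := by linarith
      have := hδ' z hz (h z) hhzK hdist
      simpa [Function.comp, dist_eq] using this

/-- Combined approximation lemma. -/
lemma approx_lemma {K : Set ℂ} (hK : IsCompact K) (hKc : Convex ℝ K) (hne : K.Nonempty)
    (f : ℂ → ℂ) (hf : ContinuousOn f K) (hfd : DifferentiableOn ℂ f (interior K))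
    {ε : ℝ} (hε : 0 < ε) :
    ∃ U : Set ℂ, IsOpen U ∧ Convex ℝ U ∧ K ⊆ U ∧
      ∃ F : ℂ → ℂ, DifferentiableOn ℂ F U ∧ ∀ z ∈ K, ‖f z - F z‖ < ε := by
  by_cases hint : (interior K).Nonempty
  · obtain ⟨z₀, hz₀⟩ := hint
    exact dilation_approx hK hKc hz₀ f hf hfd hε
  · obtain ⟨p, v, hv, hline⟩ := line_case hKc hne hint
    obtain ⟨F, hFd, hFa⟩ := line_approx hK hKc hv hline f hf hε
    exact ⟨univ, isOpen_univ, convex_univ, subset_univ K, F, hFd.differentiableOn, hFa⟩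

/-- Theorem 1, I ⇔ II: completeness of `Exp^Z` in `Hol(D)` for every convex domain of
width `≤ b` in direction `θ` is equivalent to completeness in `C(K) ∩ Hol(int K)` for
every convex compact set of width `< b` in direction `θ`. -/
theorem stmt0 (b : ℝ) (hb : 0 < b) (θ : ℝ) (Z : ℕ → ℂ) :
    (∀ D : Set ℂ, IsOpen D → Convex ℝ D → D.Nonempty →
        dirWidth D θ ≤ (b : EReal) → CompleteHol (expSystem Z) D) ↔
    (∀ K : Set ℂ, IsCompact K → Convex ℝ K →
        dirWidth K θ < (b : EReal) → CompleteCK (expSystem Z) K) := by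
  set E : ℂ := Complex.exp (-(θ : ℂ) * Complex.I) with hE
  set E' : ℂ := Complex.exp ((θ : ℂ) * Complex.I) with hE'
  have hEE' : E' * E = 1 := by
    rw [hE, hE', ← Complex.exp_add]
    rw [show (θ : ℂ) * Complex.I + -(θ : ℂ) * Complex.I = 0 by ring, Complex.exp_zero]
  set r : ℂ → ℝ := fun z => (z * E).re with hr
  have hrcont : Continuous r := by fun_prop
  have hrlin : ∀ (a b : ℝ) (x y : ℂ), r ((a : ℂ) * x + (b : ℂ) * y) = a * r x + b * r y := by
    intro a b x y
    rw [hr]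
    simp only [add_mul, mul_assoc, Complex.add_re, Complex.re_ofReal_mul]
  constructor
  · -- Hol → CK
    intro H K hK hKc hw
    intro f hf hfd ε hε
    rcases K.eq_empty_or_nonempty with rfl | hne
    · exact ⟨0, Submodule.zero_mem _, by simp⟩
    obtain ⟨zM, hzM, hmax⟩ := hK.exists_isMaxOn hne hrcont.continuousOn
    obtain ⟨wm, hwm, hmin⟩ := hK.exists_isMinOn hne hrcont.continuousOn
    set M : ℝ := r zM with hM
    set m : ℝ := r wm with hm
    have hMmb : M - m < b := by
      have h1 : (((M - m : ℝ)) : EReal) ≤ dirWidth K θ := by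
        have := le_dirWidth (θ := θ) hzM hwm
        rwa [proj_sub] at this
      have := lt_of_le_of_lt h1 hw
      exact_mod_cast this
    set η : ℝ := (b - (M - m)) / 2 with hη
    have hη0 : 0 < η := by rw [hη]; linarith
    set W : Set ℂ := r ⁻¹' Ioo (m - η) (M + η) with hWdef
    have hWo : IsOpen W := isOpen_Ioo.preimage hrcont
    have hWc : Convex ℝ W := by
      intro x hx y hy a b' ha hb' hab
      have : r (a • x + b' • y) = a * r x + b' * r y := by
        rw [Complex.real_smul, Complex.real_smul]; exact hrlin a b' x y
      show r _ ∈ Ioo (m - η) (M + η)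
      rw [this]
      have := (convex_Ioo (m - η) (M + η)) hx hy ha hb' hab
      simpa [smul_eq_mul] using this
    have hKW : K ⊆ W := by
      intro z hz
      have h1 : r z ≤ M := hmax hz
      have h2 : m ≤ r z := hmin hz
      exact ⟨by linarith, by linarith⟩
    have hWwidth : ∀ z ∈ W, ∀ w ∈ W, ((z - w) * E).re ≤ b := by
      intro z hz w hw
      rw [proj_sub]
      have h1 : r z < M + η := hz.2
      have h2 : m - η < r w := hw.1
      have : r z - r w < M - m + 2 * η := by linarith
      have hb2 : M - m + 2 * η = b := by rw [hη]; ring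
      change r z - r w ≤ b
      linarith
    obtain ⟨U, hUo, hUc, hKU, F, hFd, hFa⟩ :=
      approx_lemma hK hKc hne f hf hfd (half_pos hε)
    obtain ⟨p, hp⟩ := hne
    have hDwidth : dirWidth (U ∩ W) θ ≤ (b : EReal) :=
      dirWidth_le fun z hz w hw => hWwidth z hz.2 w hw.2
    obtain ⟨g, hg, hga⟩ := H (U ∩ W) (hUo.inter hWo) (hUc.inter hWc)
      ⟨p, hKU hp, hKW hp⟩ hDwidth F (hFd.mono inter_subset_left) K
      (subset_inter hKU hKW) hK (ε / 2) (half_pos hε)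
    refine ⟨g, hg, fun z hz => ?_⟩
    calc ‖f z - g z‖ = ‖(f z - F z) + (F z - g z)‖ := by ring_nf
      _ ≤ ‖f z - F z‖ + ‖F z - g z‖ := norm_add_le _ _
      _ < ε / 2 + ε / 2 := add_lt_add (hFa z hz) (hga z hz)
      _ = ε := by ring
  · -- CK → Hol
    intro H D hDo hDc hDne hw
    intro f hfd K hKD hK ε hε
    rcases K.eq_empty_or_nonempty with rfl | hne
    · exact ⟨0, Submodule.zero_mem _, by simp⟩
    set K' : Set ℂ := closure (convexHull ℝ K) with hK'def
    have hK'comp : IsCompact K' :=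
      TotallyBounded.isCompact_of_isClosed
        (totallyBounded_convexHull.2 hK.totallyBounded).closure isClosed_closure
    have hK'conv : Convex ℝ K' := (convex_convexHull ℝ K).closure
    have hKK' : K ⊆ K' := (subset_convexHull ℝ K).trans subset_closure
    -- margin
    obtain ⟨d, hd0, hdsub⟩ := hK.exists_thickening_subset_open hDo hKD
    set D' : Set ℂ := {z : ℂ | Metric.ball z (d / 2) ⊆ D} with hD'def
    have hKD' : K ⊆ D' := by
      intro z hz u hu
      apply hdsub
      rw [Metric.mem_thickening_iff]
      exact ⟨z, hz, lt_of_lt_of_le (Metric.mem_ball.1 hu) (by linarith)⟩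
    have hD'conv : Convex ℝ D' := by
      intro x hx y hy a b' ha hb' hab u hu
      have habc : (a : ℂ) + b' = 1 := by exact_mod_cast congrArg Complex.ofReal hab
      have hwn : ‖u - (a • x + b' • y)‖ < d / 2 := by
        rw [← dist_eq_norm]
        exact Metric.mem_ball.1 hu
      have hu' : u = a • (x + (u - (a • x + b' • y))) + b' • (y + (u - (a • x + b' • y))) := by
        simp only [Complex.real_smul]
        linear_combination (-(u - (a : ℂ) * x - (b' : ℂ) * y)) * habc
      rw [hu']
      apply hDc (hx ?_) (hy ?_) ha hb' hab
      · rw [Metric.mem_ball, dist_eq_norm, add_sub_cancel_left]; exact hwn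
      · rw [Metric.mem_ball, dist_eq_norm, add_sub_cancel_left]; exact hwn
    have hhullD' : convexHull ℝ K ⊆ D' := convexHull_min hKD' hD'conv
    have hK'D : K' ⊆ D := by
      intro z hz
      obtain ⟨y, hy, hyd⟩ := Metric.mem_closure_iff.1 hz (d / 2) (by linarith)
      exact hhullD' hy (Metric.mem_ball.2 hyd)
    -- width of K' is < b
    have hK'ne : K'.Nonempty := hne.mono hKK'
    obtain ⟨zM, hzM, hmax⟩ := hK'comp.exists_isMaxOn hK'ne hrcont.continuousOn
    obtain ⟨wm, hwm, hmin⟩ := hK'comp.exists_isMinOn hK'ne hrcont.continuousOn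
    set M : ℝ := r zM with hM
    set m : ℝ := r wm with hm
    obtain ⟨δ1, hδ1, hball1⟩ := Metric.isOpen_iff.1 hDo zM (hK'D hzM)
    obtain ⟨δ2, hδ2, hball2⟩ := Metric.isOpen_iff.1 hDo wm (hK'D hwm)
    set δ : ℝ := min δ1 δ2 / 2 with hδdef
    have hδ0 : 0 < δ := by positivity
    have hδlt1 : δ < δ1 := by
      have h1 := min_le_left δ1 δ2
      have h2 : 0 < min δ1 δ2 := lt_min hδ1 hδ2
      rw [hδdef]; linarith
    have hδlt2 : δ < δ2 := by
      have h1 := min_le_right δ1 δ2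
      have h2 : 0 < min δ1 δ2 := lt_min hδ1 hδ2
      rw [hδdef]; linarith
    have habsE' : ‖(δ : ℂ) * E'‖ = δ := by
      rw [norm_mul, Complex.norm_real, Real.norm_eq_abs, abs_of_pos hδ0, hE', Complex.norm_exp]
      simp
    have hz' : zM + (δ : ℂ) * E' ∈ D := by
      apply hball1
      rw [Metric.mem_ball, dist_eq]
      rw [show zM + (δ : ℂ) * E' - zM = (δ : ℂ) * E' by ring, habsE']
      exact hδlt1
    have hw' : wm - (δ : ℂ) * E' ∈ D := by
      apply hball2
      rw [Metric.mem_ball, dist_eq]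
      rw [show wm - (δ : ℂ) * E' - wm = -((δ : ℂ) * E') by ring, norm_neg, habsE']
      exact hδlt2
    have hrsum : ((zM + (δ : ℂ) * E' - (wm - (δ : ℂ) * E')) * E).re = M - m + 2 * δ := by
      have : (zM + (δ : ℂ) * E' - (wm - (δ : ℂ) * E')) * E
          = zM * E - wm * E + (2 * δ : ℝ) * (E' * E) := by push_cast; ring
      rw [this, hEE', mul_one]
      simp [hM, hm, hr]
    have hMmb : M - m + 2 * δ ≤ b := by
      have h1 : (((M - m + 2 * δ : ℝ)) : EReal) ≤ dirWidth D θ := by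
        have := le_dirWidth (θ := θ) hz' hw'
        rwa [hrsum] at this
      have := le_trans h1 hw
      exact_mod_cast this
    have hK'w : dirWidth K' θ < (b : EReal) := by
      have h1 : dirWidth K' θ ≤ ((M - m : ℝ) : EReal) := by
        apply dirWidth_le
        intro z hz w hw'
        rw [proj_sub]
        have := hmax hz
        have := hmin hw'
        change r z - r w ≤ M - m
        have hz1 : r z ≤ M := hmax hz
        have hw1 : m ≤ r w := hmin hw'
        linarith
      apply lt_of_le_of_lt h1
      exact_mod_cast (by linarith : M - m < b)
    obtain ⟨g, hg, hga⟩ := H K' hK'comp hK'conv hK'w f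
      ((hfd.continuousOn).mono hK'D)
      (hfd.mono (interior_subset.trans hK'D)) ε hε
    exact ⟨g, hg, fun z hz => hga z (hKK' hz)⟩

end
end

section
/- Let Z = (z_n) be a sequence of pairwise distinct complex numbers that is separated, i.e., inf{|z_n − z_m| : n ≠ m} > 0, and that lies entirely in a closed horizontal strip S̄_{b/2} = {z ∈ ℂ : |Im z| ≤ b/2} of finite width b ∈ ℝ≥0. Then Z has finite Redheffer exterior density: there exist c ∈ ℝ≥0 and pairwise distinct integers m_n ∈ ℤ with Σ_n |1/z_n − c/m_n| < +∞ (where any z_n = 0 is excluded from the sum, or Z is assumed to consist of nonzero numbers). -/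
open Complex Filter Set
open scoped ENNReal ENat

noncomputable section

set_option maxHeartbeats 1000000 in
/-- A separated sequence of pairwise distinct nonzero complex numbers lying in a closed
horizontal strip of finite width `b` has finite Redheffer exterior density. -/
theorem stmt14 (b : ℝ) (hb : 0 ≤ b) (Z : ℕ → ℂ) (hne : ∀ n, Z n ≠ 0)
    (hinj : Function.Injective Z)
    (hsep : ∃ δ : ℝ, 0 < δ ∧ ∀ n m : ℕ, n ≠ m → δ ≤ ‖Z n - Z m‖)
    (hstrip : ∀ n, Z n ∈ closedStrip b) :
    HasFinRedheffer Z := by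
  obtain ⟨δ, hδ, hsepp⟩ := hsep
  set δ' : ℝ := min δ 1 with hδ'def
  have hδ'0 : 0 < δ' := lt_min hδ one_pos
  have hδ'1 : δ' ≤ 1 := min_le_right _ _
  have hδ'δ : δ' ≤ δ := min_le_left _ _
  set s : ℝ := 2 / δ' with hsdef
  have hs : 0 < s := by positivity
  set K : ℕ := ⌈s * b / 2⌉₊ + 1 with hKdef
  have hK1 : (1:ℝ) ≤ (K:ℝ) := by
    have : (1:ℕ) ≤ K := by omega
    exact_mod_cast this
  have hKb : s * b / 2 + 1 ≤ (K:ℝ) := by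
    have h1 := Nat.le_ceil (s * b / 2)
    have h2 : ((⌈s * b / 2⌉₊ : ℕ) : ℝ) + 1 = (K : ℝ) := by push_cast [hKdef]; ring
    linarith
  set A : ℕ → ℤ := fun n => ⌊s * (Z n).re⌋ with hAdef
  set I : ℕ → ℤ := fun n => ⌊s * (Z n).im⌋ with hIdef
  have hIm : ∀ n, |(Z n).im| ≤ b / 2 := fun n => hstrip n
  -- bounds on the imaginary index
  have hIbound : ∀ n, (0:ℤ) ≤ I n + K ∧ (I n : ℤ) + K ≤ 2 * K - 1 := by
    intro n
    have him1 : -(b/2) ≤ (Z n).im := (abs_le.mp (hIm n)).1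
    have him2 : (Z n).im ≤ b/2 := (abs_le.mp (hIm n)).2
    have hsb : 0 ≤ s * (b/2) := by positivity
    have h1 : -(s * (b/2)) ≤ s * (Z n).im := by nlinarith
    have h2 : s * (Z n).im ≤ s * (b/2) := by nlinarith
    constructor
    · have hcast : ((-(K:ℤ) : ℤ) : ℝ) = -(K:ℝ) := by push_cast; ring
      have hle : ((-(K:ℤ) : ℤ) : ℝ) ≤ s * (Z n).im := by rw [hcast]; nlinarith
      have h2' : -(K:ℤ) ≤ I n := Int.le_floor.mpr hle
      omega
    · have hfl : (I n : ℝ) ≤ s * (Z n).im := Int.floor_le _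
      have : (I n : ℝ) ≤ (K:ℝ) - 1 := by nlinarith
      have : I n ≤ (K:ℤ) - 1 := by exact_mod_cast this
      omega
  -- cell map is injective thanks to separation
  have hcell : ∀ n n', A n = A n' → I n = I n' → n = n' := by
    intro n n' hA hI
    by_contra hne'
    have hd := hsepp n n' hne'
    have hre : |(Z n).re - (Z n').re| < δ' / 2 := by
      have f1 : (A n : ℝ) ≤ s * (Z n).re := Int.floor_le _
      have f2 : s * (Z n).re < (A n : ℝ) + 1 := Int.lt_floor_add_one _
      have f3 : (A n' : ℝ) ≤ s * (Z n').re := Int.floor_le _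
      have f4 : s * (Z n').re < (A n' : ℝ) + 1 := Int.lt_floor_add_one _
      have hAc : (A n : ℝ) = (A n' : ℝ) := by exact_mod_cast hA
      have h5 : |s * (Z n).re - s * (Z n').re| < 1 := by
        rw [abs_lt]; constructor <;> linarith
      have h6 : s * |(Z n).re - (Z n').re| < 1 := by
        rwa [← abs_of_pos hs, ← abs_mul, mul_sub]
      have h7 : |(Z n).re - (Z n').re| < 1 / s := by
        rw [lt_div_iff₀ hs]; linarith [h6]
      have h8 : 1 / s = δ' / 2 := by rw [hsdef]; field_simp
      linarith [h7, h8.le]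
    have him : |(Z n).im - (Z n').im| < δ' / 2 := by
      have f1 : (I n : ℝ) ≤ s * (Z n).im := Int.floor_le _
      have f2 : s * (Z n).im < (I n : ℝ) + 1 := Int.lt_floor_add_one _
      have f3 : (I n' : ℝ) ≤ s * (Z n').im := Int.floor_le _
      have f4 : s * (Z n').im < (I n' : ℝ) + 1 := Int.lt_floor_add_one _
      have hIc : (I n : ℝ) = (I n' : ℝ) := by exact_mod_cast hI
      have h5 : |s * (Z n).im - s * (Z n').im| < 1 := by
        rw [abs_lt]; constructor <;> linarith
      have h6 : s * |(Z n).im - (Z n').im| < 1 := by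
        rwa [← abs_of_pos hs, ← abs_mul, mul_sub]
      have h7 : |(Z n).im - (Z n').im| < 1 / s := by
        rw [lt_div_iff₀ hs]; linarith [h6]
      have h8 : 1 / s = δ' / 2 := by rw [hsdef]; field_simp
      linarith [h7, h8.le]
    have hsq : (‖Z n - Z n'‖)^2 = ((Z n).re - (Z n').re)^2 + ((Z n).im - (Z n').im)^2 := by
      rw [Complex.sq_norm, Complex.normSq_apply, Complex.sub_re, Complex.sub_im]; ring
    have h9 : (‖Z n - Z n'‖)^2 < δ'^2 / 2 := by
      have hr2 : ((Z n).re - (Z n').re)^2 < (δ'/2)^2 :=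
        sq_lt_sq' (abs_lt.mp hre).1 (abs_lt.mp hre).2
      have hi2 : ((Z n).im - (Z n').im)^2 < (δ'/2)^2 :=
        sq_lt_sq' (abs_lt.mp him).1 (abs_lt.mp him).2
      rw [hsq]; nlinarith
    nlinarith [hd, hδ, hδ'0, hδ'δ, norm_nonneg (Z n - Z n')]
  set m : ℕ → ℤ := fun n => 2 * K * A n + (I n + K) with hmdef
  have hm : Function.Injective m := by
    intro n n' h
    have hIb := hIbound n
    have hIb' := hIbound n'
    have heq : 2 * (K:ℤ) * (A n - A n') = (I n' + K) - (I n + K) := by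
      have : 2 * (K:ℤ) * A n + (I n + K) = 2 * K * A n' + (I n' + K) := h
      ring_nf
      ring_nf at this
      linarith
    have hKz : (1:ℤ) ≤ (K:ℤ) := by exact_mod_cast Nat.one_le_iff_ne_zero.mpr (by omega)
    have hAeq : A n = A n' := by
      by_contra hAne
      rcases lt_or_gt_of_ne hAne with hlt | hgt
      · have h1 : A n - A n' ≤ -1 := by omega
        have : 2 * (K:ℤ) * (A n - A n') ≤ 2 * K * (-1) := by
          apply mul_le_mul_of_nonneg_left h1; positivity
        omega
      · have h1 : (1:ℤ) ≤ A n - A n' := by omega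
        have : 2 * (K:ℤ) * 1 ≤ 2 * K * (A n - A n') := by
          apply mul_le_mul_of_nonneg_left h1; positivity
        omega
    have hIeq : I n = I n' := by rw [hAeq] at heq; omega
    exact hcell n n' hAeq hIeq
  set c : ℝ := 2 * K * s with hcdef
  have hc : 0 < c := by positivity
  set B : ℝ := 4 * K + K * s * b with hBdef
  have hB : 0 < B := by nlinarith
  have hbound : ∀ n, ‖(m n : ℂ) - (c:ℂ) * Z n‖ ≤ B := by
    intro n
    have hIb := hIbound n
    have hre : ((m n : ℂ) - (c:ℂ) * Z n).re = ((m n : ℤ) : ℝ) - c * (Z n).re := by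
      simp [Complex.sub_re, Complex.mul_re]
    have himeq : ((m n : ℂ) - (c:ℂ) * Z n).im = -(c * (Z n).im) := by
      simp [Complex.sub_im, Complex.mul_im]
    refine le_trans (Complex.norm_le_abs_re_add_abs_im _) ?_
    rw [hre, himeq]
    have f1 : (A n : ℝ) ≤ s * (Z n).re := Int.floor_le _
    have f2 : s * (Z n).re < (A n : ℝ) + 1 := Int.lt_floor_add_one _
    have hmr : ((m n : ℤ) : ℝ) = 2 * K * (A n : ℝ) + ((I n : ℝ) + K) := by
      rw [hmdef]; push_cast; ring
    have hIr1 : (0:ℝ) ≤ (I n : ℝ) + K := by exact_mod_cast hIb.1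
    have hIr2 : (I n : ℝ) + K ≤ 2 * K - 1 := by exact_mod_cast hIb.2
    have hre_bound : |((m n : ℤ) : ℝ) - c * (Z n).re| ≤ 4 * K := by
      rw [abs_le]; constructor
      · rw [hmr, hcdef]; nlinarith
      · rw [hmr, hcdef]; nlinarith
    have him_bound : |-(c * (Z n).im)| ≤ K * s * b := by
      rw [abs_neg, abs_mul, abs_of_pos hc]
      have := hIm n
      rw [hcdef]; nlinarith [abs_nonneg (Z n).im]
    rw [hBdef]; linarith
  refine ⟨c, hc.le, m, hm, ?_⟩
  have hsum0 : Summable (fun k : ℤ => 1 / (k:ℝ)^2) := Real.summable_one_div_int_pow.mpr one_lt_two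
  have hsum1 : Summable (fun n : ℕ => 2 * B * c * (1 / ((m n : ℤ):ℝ)^2)) := by
    have h := (hsum0.comp_injective hm).mul_left (2 * B * c)
    simpa [Function.comp] using h
  refine Summable.of_norm_bounded_eventually
    (g := fun n : ℕ => 2 * B * c * (1 / ((m n : ℤ):ℝ)^2)) hsum1 ?_
  rw [Filter.eventually_cofinite]
  have hbad : {n : ℕ | ¬ 2 * B ≤ |((m n : ℤ) : ℝ)|}.Finite := by
    apply Set.Finite.subset ((Set.finite_Icc (-⌈2*B⌉) ⌈2*B⌉).preimage (hm.injOn))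
    intro n hn
    simp only [Set.mem_setOf_eq, not_le] at hn
    have h1 : ((m n : ℤ) : ℝ) ≤ (⌈2*B⌉ : ℝ) :=
      le_trans (le_trans (le_abs_self _) hn.le) (Int.le_ceil _)
    have h2 : (-(⌈2*B⌉:ℤ) : ℝ) ≤ ((m n : ℤ) : ℝ) := by
      push_cast
      have := neg_abs_le ((m n : ℤ) : ℝ)
      have := Int.le_ceil (2*B)
      nlinarith [abs_nonneg ((m n : ℤ) : ℝ)]
    exact Set.mem_preimage.mpr ⟨by exact_mod_cast h2, by exact_mod_cast h1⟩
  apply hbad.subset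
  intro n hn
  simp only [Set.mem_setOf_eq] at hn ⊢
  intro hgood
  apply hn
  -- main estimate
  set z := Z n with hzdef
  set w : ℂ := ((m n : ℤ) : ℂ) with hwdef
  have hW : ‖w‖ = |((m n : ℤ) : ℝ)| := Complex.norm_intCast _
  have hWpos : 0 < ‖w‖ := by rw [hW]; linarith
  have hw0 : w ≠ 0 := by
    intro h0; rw [h0] at hWpos; simp at hWpos
  have hz0 : z ≠ 0 := hne n
  have hZpos : 0 < ‖z‖ := norm_pos_iff.mpr hz0
  have heq : 1 / z - (c:ℂ) / w = (w - (c:ℂ) * z) / (z * w) := by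
    field_simp
  rw [heq, norm_div, norm_mul]
  have hnum : ‖w - (c:ℂ) * z‖ ≤ B := hbound n
  have hcz : ‖(c:ℂ) * z‖ = c * ‖z‖ := by
    rw [norm_mul, Complex.norm_of_nonneg hc.le]
  have htri : ‖w‖ - B ≤ c * ‖z‖ := by
    have h := norm_add_le (w - (c:ℂ) * z) ((c:ℂ) * z)
    rw [sub_add_cancel, hcz] at h
    linarith
  have hWB : 2 * B ≤ ‖w‖ := by rw [hW]; exact hgood
  have hzlb : ‖w‖ / (2 * c) ≤ ‖z‖ := by
    rw [div_le_iff₀ (by positivity)]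
    nlinarith
  have hrw : ‖‖w - (c:ℂ) * z‖ / (‖z‖ * ‖w‖)‖
      = ‖w - (c:ℂ) * z‖ / (‖z‖ * ‖w‖) := by
    rw [Real.norm_of_nonneg]; positivity
  rw [hrw]
  have hstep : ‖w - (c:ℂ) * z‖ / (‖z‖ * ‖w‖)
      ≤ B / ((‖w‖)^2 / (2 * c)) := by
    apply div_le_div₀ hB.le hnum (by positivity)
    rw [div_le_iff₀ (by positivity)]
    nlinarith
  refine le_trans hstep ?_
  rw [div_div_eq_mul_div]
  have hW2 : (‖w‖)^2 = ((m n : ℤ) : ℝ)^2 := by rw [hW]; exact _root_.sq_abs _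
  rw [hW2]
  rw [mul_one_div]
  apply le_of_eq
  ring

end
end
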